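/- arXiv:1212.3498 — 5 statements merged into one kernel-verified Lean document; each statement's English description precedes it below -/
import Mathlib

section
/- Suppose a is a positive integer such that φ(b) = φ(a) has no solution b ≠ a (a counterexample to Carmichael's conjecture). If d·∏_{p|d} p divides a and p = 1 + d is prime, then p² divides a. -/
lemma aux_tot (k : ℕ) : ∀ m : ℕ, (∀ p : ℕ, p.Prime → p ∣ k → p ∣ m) →
    (k * m).totient = k * m.totient := by
  induction k using Nat.strong_induction_on with
  | _ k ih =>
    intro m hm
    rcases eq_or_ne k 0 with rfl | hk0
    · simp
    rcases eq_or_ne k 1 with rfl | hk1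
    · simp
    have hp := Nat.minFac_prime hk1
    obtain ⟨k', hk'⟩ := k.minFac_dvd
    set p := k.minFac with hpdef
    clear_value p
    have hk'lt : k' < k := by
      rcases Nat.eq_zero_or_pos k' with rfl | hk'0
      · omega
      calc k' < p * k' := by
            have := hp.two_le; nlinarith
        _ = k := hk'.symm
    have hpm : p ∣ m := hm _ hp (hpdef ▸ k.minFac_dvd)
    have heq : k * m = k' * (p * m) := by rw [hk']; ring
    rw [heq, ih k' hk'lt (p * m)
        (fun q hq hqk' => Dvd.dvd.mul_left (hm q hq (hk' ▸ Dvd.dvd.mul_left hqk' p)) _),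
      Nat.totient_mul_of_prime_of_dvd hp hpm, hk']
    ring

theorem stmt_4 (a : ℕ) (ha : 0 < a)
    (hcar : ∀ b : ℕ, 0 < b → Nat.totient b = Nat.totient a → b = a)
    (d : ℕ) (hd : 0 < d)
    (hdiv : (d * ∏ p ∈ d.primeFactors, p) ∣ a)
    (hp : Nat.Prime (1 + d)) : (1 + d) ^ 2 ∣ a := by
  set P := 1 + d with hPdef
  by_contra hnot
  have hrad_dvd_d : (∏ p ∈ d.primeFactors, p) ∣ d := Nat.prod_primeFactors_dvd d
  have hPd : ¬ P ∣ d := fun h => by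
    have := Nat.le_of_dvd hd h; omega
  have key : ∀ p : ℕ, p.Prime → p ∣ d → p ∣ (∏ q ∈ d.primeFactors, q) := fun p hpp hpd =>
    Finset.dvd_prod_of_mem _ (Nat.mem_primeFactors.mpr ⟨hpp, hpd, hd.ne'⟩)
  by_cases hPa : P ∣ a
  · -- P ‖ a case
    obtain ⟨c, hc⟩ := hPa
    have hc0 : 0 < c := by
      rcases Nat.eq_zero_or_pos c with rfl | h; · simp [hc] at ha
      exact h
    have hPc : ¬ P ∣ c := fun h => hnot (by rw [hc, sq]; exact mul_dvd_mul_left P h)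
    have hPdr : ¬ P ∣ (d * ∏ p ∈ d.primeFactors, p) := fun h =>
      hPd ((hp.dvd_mul.mp h).elim id (fun h' => h'.trans hrad_dvd_d))
    have hdrc : (d * ∏ p ∈ d.primeFactors, p) ∣ c := by
      have hcop : Nat.Coprime (d * ∏ p ∈ d.primeFactors, p) P :=
        (Nat.coprime_comm.mp (hp.coprime_iff_not_dvd.mpr hPdr))
      have : (d * ∏ p ∈ d.primeFactors, p) ∣ P * c := hc ▸ hdiv
      exact hcop.dvd_of_dvd_mul_left this
    obtain ⟨m, hmeq⟩ := (dvd_trans (dvd_mul_right d _) hdrc)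
    have hm0 : 0 < m := by
      rcases Nat.eq_zero_or_pos m with rfl | h; · simp [hmeq] at hc0
      exact h
    have hradm : (∏ p ∈ d.primeFactors, p) ∣ m := by
      have : d * (∏ p ∈ d.primeFactors, p) ∣ d * m := hmeq ▸ hdrc
      exact (mul_dvd_mul_iff_left hd.ne').mp this
    have hPdm : ¬ P ∣ d * m := fun h =>
      (hp.dvd_mul.mp h).elim hPd (fun h' => hPc (h'.trans ⟨d, by rw [hmeq]; ring⟩))
    have hprimes : ∀ p : ℕ, p.Prime → p ∣ d → p ∣ d * m := fun p hpp hpd =>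
      Dvd.dvd.mul_left ((key p hpp hpd).trans hradm) d
    have hphia : Nat.totient a = d * Nat.totient (d * m) := by
      rw [hc, hmeq, Nat.totient_mul_of_prime_of_not_dvd hp hPdm]
      congr 1
      omega
    have hphib : Nat.totient (d * (d * m)) = d * Nat.totient (d * m) :=
      aux_tot d (d * m) hprimes
    have hb := hcar (d * (d * m)) (by positivity) (hphib.trans hphia.symm)
    rw [hc, hmeq] at hb
    have : d = P := by
      have hdm : 0 < d * m := by positivity
      exact Nat.eq_of_mul_eq_mul_right hdm (by linarith [hb])
    omega
  · -- P ∤ a case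
    obtain ⟨m, hmeq⟩ := (dvd_trans (dvd_mul_right d _) hdiv)
    have hm0 : 0 < m := by
      rcases Nat.eq_zero_or_pos m with rfl | h; · simp [hmeq] at ha
      exact h
    have hradm : (∏ p ∈ d.primeFactors, p) ∣ m := by
      have : d * (∏ p ∈ d.primeFactors, p) ∣ d * m := hmeq ▸ hdiv
      exact (mul_dvd_mul_iff_left hd.ne').mp this
    have hPm : ¬ P ∣ m := fun h => hPa (h.trans ⟨d, by rw [hmeq]; ring⟩)
    have hphia : Nat.totient a = d * Nat.totient m := by
      rw [hmeq]
      exact aux_tot d m (fun p hpp hpd => (key p hpp hpd).trans hradm)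
    have hphib : Nat.totient (P * m) = d * Nat.totient m := by
      rw [Nat.totient_mul_of_prime_of_not_dvd hp hPm]
      congr 1
      omega
    have hb := hcar (P * m) (by positivity) (hphib.trans hphia.symm)
    rw [hmeq] at hb
    have : P = d := Nat.eq_of_mul_eq_mul_right hm0 hb
    omega
end

section
/- Let A be a set of primes and T the set of positive integers all of whose prime factors lie in A. Then for s with 0 < s ≤ 1, ∑_{m ∈ T} m^{-s} = ∏_{p ∈ A} (1 − p^{-s})^{-1} ≤ exp(λ(s) · ∑_{p∈A} (p−1)^{-s}), where λ(s) = 1/(2^s−1), whenever the sum ∑_{p∈A}(p−1)^{-s} is finite. -/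
open Real Finset

lemma aux_phi {s : ℝ} (hs0 : 0 < s) (hs1 : s ≤ 1) :
    ∀ u ∈ Set.Icc (0:ℝ) 1, (2:ℝ)^s - 1 ≤ (1+u)^s - u^s := by
  set φ : ℝ → ℝ := fun u => (1+u)^s - u^s with hφ
  have hcont : ContinuousOn φ (Set.Icc 0 1) := by
    intro u hu
    apply ContinuousAt.continuousWithinAt
    apply ContinuousAt.sub
    · exact (Real.continuousAt_rpow_const _ _ (Or.inl (by nlinarith [hu.1]))).comp
        (by fun_prop : ContinuousAt (fun u : ℝ => 1 + u) u)
    · exact Real.continuousAt_rpow_const _ _ (Or.inr hs0.le)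
  have hder : ∀ u ∈ Set.Ioo (0:ℝ) 1, HasDerivAt φ (s * (1+u)^(s-1) - s * u^(s-1)) u := by
    intro u hu
    have h1 : HasDerivAt (fun u : ℝ => (1+u)^s) (s * (1+u)^(s-1)) u := by
      have h0 := (Real.hasDerivAt_rpow_const (x := 1+u) (p := s)
        (Or.inl (by linarith [hu.1]))).comp u ((hasDerivAt_id u).const_add 1)
      rw [mul_one] at h0
      exact h0
    have h2 : HasDerivAt (fun u : ℝ => u^s) (s * u^(s-1)) u :=
      Real.hasDerivAt_rpow_const (Or.inl (ne_of_gt hu.1))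
    exact h1.sub h2
  have hanti : AntitoneOn φ (Set.Icc 0 1) := by
    apply antitoneOn_of_deriv_nonpos (convex_Icc 0 1) hcont
    · rw [interior_Icc]
      exact fun u hu => ((hder u hu).differentiableAt).differentiableWithinAt
    · rw [interior_Icc]
      intro u hu
      rw [(hder u hu).deriv]
      have hle : (1+u)^(s-1) ≤ u^(s-1) :=
        Real.rpow_le_rpow_of_nonpos hu.1 (by linarith) (by linarith)
      nlinarith
  intro u hu
  have h := hanti hu (Set.right_mem_Icc.mpr zero_le_one) hu.2
  simp only [hφ, Real.one_rpow] at h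
  norm_num at h
  linarith

lemma aux_factor {s : ℝ} (hs0 : 0 < s) (hs1 : s ≤ 1) {p : ℕ} (hp : p.Prime) :
    (1 - (p:ℝ)^(-s))⁻¹ ≤ Real.exp ((1/((2:ℝ)^s - 1)) * ((p:ℝ)-1)^(-s)) := by
  have hq2 : (2:ℝ) ≤ (p:ℝ) := by exact_mod_cast hp.two_le
  set q : ℝ := (p:ℝ)
  have hx1 : (1:ℝ) ≤ q - 1 := by linarith
  have hx0 : (0:ℝ) < q - 1 := by linarith
  set x : ℝ := q - 1 with hxdef
  -- key inequality
  have hkey : ((2:ℝ)^s - 1) * x^s ≤ q^s - 1 := by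
    have h := aux_phi hs0 hs1 (1/x) ⟨by positivity, by
      rw [div_le_one hx0]; linarith⟩
    have hxs : (0:ℝ) < x^s := Real.rpow_pos_of_pos hx0 s
    have hmul : x^s * ((1 + 1/x)^s - (1/x)^s) = q^s - 1 := by
      rw [mul_sub, ← Real.mul_rpow hx0.le (by positivity), ← Real.mul_rpow hx0.le (by positivity)]
      have e1 : x * (1 + 1/x) = q := by field_simp; rw [hxdef]; ring
      have e2 : x * (1/x) = 1 := by field_simp
      rw [e1, e2, Real.one_rpow]
    nlinarith
  have h2s : (1:ℝ) < (2:ℝ)^s := Real.one_lt_rpow_iff_of_pos (by norm_num) |>.mpr (Or.inl ⟨by norm_num, hs0⟩)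
  have hqs : (1:ℝ) < q^s := Real.one_lt_rpow_iff_of_pos (by linarith) |>.mpr (Or.inl ⟨by linarith, hs0⟩)
  have hxs : (0:ℝ) < x^s := Real.rpow_pos_of_pos hx0 s
  -- rewrite (1 - q^{-s})⁻¹ = 1 + 1/(q^s - 1)
  have hqs0 : (0:ℝ) < q^s := by linarith
  have hrw : (1 - q^(-s))⁻¹ = 1 + 1/(q^s - 1) := by
    have h1 : q^s - 1 ≠ 0 := by linarith
    rw [Real.rpow_neg (by linarith : (0:ℝ) ≤ q), eq_comm]
    field_simp
    ring
  rw [hrw]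
  have hstep : 1/(q^s - 1) ≤ (1/((2:ℝ)^s - 1)) * x^(-s) := by
    rw [Real.rpow_neg hx0.le]
    have e : (1/((2:ℝ)^s-1)) * (x^s)⁻¹ = 1/(((2:ℝ)^s-1)*(x^s)) := by
      rw [one_div, one_div, mul_inv]
    rw [e]
    exact one_div_le_one_div_of_le (by nlinarith) hkey
  calc 1 + 1/(q^s - 1) ≤ 1 + (1/((2:ℝ)^s - 1)) * x^(-s) := by linarith
    _ ≤ Real.exp ((1/((2:ℝ)^s - 1)) * x^(-s)) := by
        have := Real.add_one_le_exp ((1/((2:ℝ)^s - 1)) * x^(-s)); linarith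

noncomputable def fhom (s : ℝ) (hs : 0 < s) : ℕ →*₀ ℝ where
  toFun := fun n => (n:ℝ)^(-s)
  map_zero' := by
    simp [Real.zero_rpow (neg_ne_zero.mpr (ne_of_gt hs))]
  map_one' := by simp
  map_mul' := fun m n => by
    push_cast
    exact Real.mul_rpow (Nat.cast_nonneg m) (Nat.cast_nonneg n)

noncomputable def ghom (A : Set ℕ) (s : ℝ) (hs : 0 < s) : ℕ →*₀ ℝ where
  toFun := Set.indicator {n : ℕ | 0 < n ∧ ∀ p : ℕ, Nat.Prime p → p ∣ n → p ∈ A}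
    (fun n => (n:ℝ)^(-s))
  map_zero' := Set.indicator_of_notMem (by simp) _
  map_one' := by
    show Set.indicator {n : ℕ | 0 < n ∧ ∀ p : ℕ, Nat.Prime p → p ∣ n → p ∈ A}
      (fun n => (n:ℝ)^(-s)) 1 = 1
    have h1 : (1:ℕ) ∈ {n : ℕ | 0 < n ∧ ∀ p : ℕ, Nat.Prime p → p ∣ n → p ∈ A} :=
      ⟨one_pos, fun p hp hd => absurd (Nat.dvd_one.mp hd) hp.ne_one⟩
    rw [Set.indicator_of_mem h1]
    simp
  map_mul' := by
    classical
    intro m n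
    show Set.indicator {n : ℕ | 0 < n ∧ ∀ p : ℕ, Nat.Prime p → p ∣ n → p ∈ A}
        (fun n => (n:ℝ)^(-s)) (m * n) =
      Set.indicator {n : ℕ | 0 < n ∧ ∀ p : ℕ, Nat.Prime p → p ∣ n → p ∈ A}
        (fun n => (n:ℝ)^(-s)) m *
      Set.indicator {n : ℕ | 0 < n ∧ ∀ p : ℕ, Nat.Prime p → p ∣ n → p ∈ A}
        (fun n => (n:ℝ)^(-s)) n
    set T : Set ℕ := {n : ℕ | 0 < n ∧ ∀ p : ℕ, Nat.Prime p → p ∣ n → p ∈ A} with hT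
    by_cases hm : m ∈ T
    · by_cases hn : n ∈ T
      · have hmn : m * n ∈ T := by
          refine ⟨Nat.mul_pos hm.1 hn.1, fun p hp hd => ?_⟩
          rcases hp.dvd_mul.mp hd with h | h
          · exact hm.2 p hp h
          · exact hn.2 p hp h
        rw [Set.indicator_of_mem hmn, Set.indicator_of_mem hm, Set.indicator_of_mem hn]
        push_cast
        exact Real.mul_rpow (Nat.cast_nonneg m) (Nat.cast_nonneg n)
      · have hmn : m * n ∉ T := fun h =>
          hn ⟨Nat.pos_of_ne_zero (right_ne_zero_of_mul h.1.ne'), fun p hp hd =>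
            h.2 p hp (hd.mul_left m)⟩
        rw [Set.indicator_of_notMem hmn, Set.indicator_of_notMem hn, mul_zero]
    · have hmn : m * n ∉ T := fun h =>
        hm ⟨Nat.pos_of_ne_zero (left_ne_zero_of_mul h.1.ne'), fun p hp hd =>
          h.2 p hp (hd.mul_right n)⟩
      rw [Set.indicator_of_notMem hmn, Set.indicator_of_notMem hm, zero_mul]

lemma ghom_apply (A : Set ℕ) (s : ℝ) (hs : 0 < s) (n : ℕ) :
    ghom A s hs n = Set.indicator {n : ℕ | 0 < n ∧ ∀ p : ℕ, Nat.Prime p → p ∣ n → p ∈ A}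
      (fun n => (n:ℝ)^(-s)) n := rfl

theorem stmt_6 (A : Set ℕ) (hA : ∀ p ∈ A, Nat.Prime p)
    (s : ℝ) (hs0 : 0 < s) (hs1 : s ≤ 1)
    (hV : Summable fun p : A => (((p : ℕ) : ℝ) - 1) ^ (-s)) :
    (∑' m : {n : ℕ // 0 < n ∧ ∀ p : ℕ, Nat.Prime p → p ∣ n → p ∈ A},
        ((m : ℕ) : ℝ) ^ (-s)) = ∏' p : A, (1 - ((p : ℕ) : ℝ) ^ (-s))⁻¹ ∧
    (∏' p : A, (1 - ((p : ℕ) : ℝ) ^ (-s))⁻¹) ≤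
      Real.exp ((1 / ((2 : ℝ) ^ s - 1)) * ∑' p : A, (((p : ℕ) : ℝ) - 1) ^ (-s)) := by
  classical
  set T : Set ℕ := {n : ℕ | 0 < n ∧ ∀ p : ℕ, Nat.Prime p → p ∣ n → p ∈ A} with hTdef
  set f0 : ℕ → ℝ := fun n => (n:ℝ)^(-s) with hf0
  set g : ℕ →*₀ ℝ := ghom A s hs0 with hgdef
  have hgapp : ∀ n, g n = T.indicator f0 n := fun n => rfl
  set lam : ℝ := 1/((2:ℝ)^s - 1) with hlamdef
  set V : ℝ := ∑' p : A, (((p : ℕ) : ℝ) - 1) ^ (-s) with hVdef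
  set C : ℝ := Real.exp (lam * V) with hCdef
  have hg_nonneg : ∀ n, 0 ≤ g n := fun n => by
    rw [hgapp]
    exact Set.indicator_nonneg (fun i _ => Real.rpow_nonneg (Nat.cast_nonneg i) _) n
  -- norms of fhom at primes are < 1
  have hnorm1 : ∀ {p : ℕ}, p.Prime → ‖(fhom s hs0 : ℕ →* ℝ) p‖ < 1 := by
    intro p hp
    have h1 : (1:ℝ) < (p:ℝ) := by exact_mod_cast hp.one_lt
    show ‖(p:ℝ)^(-s)‖ < 1
    rw [Real.norm_of_nonneg (Real.rpow_nonneg (Nat.cast_nonneg p) _)]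
    exact Real.rpow_lt_one_of_one_lt_of_neg h1 (by linarith)
  have hplt1 : ∀ {p : ℕ}, p.Prime → (p:ℝ)^(-s) < 1 := by
    intro p hp
    have h : ‖(p:ℝ)^(-s)‖ < 1 := hnorm1 hp
    rwa [Real.norm_of_nonneg (Real.rpow_nonneg (Nat.cast_nonneg p) _)] at h
  -- finite sums of (p-1)^(-s) over subsets of A are bounded by V
  have hsumF : ∀ F : Finset ℕ, (∀ p ∈ F, p ∈ A) → ∑ p ∈ F, ((p:ℝ)-1)^(-s) ≤ V := by
    intro F hF
    have hemb : Function.Injective (fun x : {x // x ∈ F} => (⟨x.1, hF x.1 x.2⟩ : A)) := by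
      intro a b h
      have h' := congrArg Subtype.val h
      exact Subtype.ext h'
    set F' : Finset ↥A := F.attach.map ⟨_, hemb⟩ with hF'
    have he : ∑ p ∈ F, ((p:ℝ)-1)^(-s) = ∑ p ∈ F', (((p:ℕ):ℝ)-1)^(-s) := by
      rw [hF', Finset.sum_map, ← Finset.sum_attach F (fun p => ((p:ℝ)-1)^(-s))]
      rfl
    rw [he, hVdef]
    refine Summable.sum_le_tsum F' (fun p _ => ?_) hV
    have : (1:ℝ) ≤ (p:ℕ) := by exact_mod_cast (hA p p.2).one_lt.le
    exact Real.rpow_nonneg (by linarith) _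
  -- finite products over subsets of A are bounded by C
  have hprodF : ∀ F : Finset ℕ, (∀ p ∈ F, p ∈ A) → ∏ p ∈ F, (1 - (p:ℝ)^(-s))⁻¹ ≤ C := by
    intro F hF
    have h1 : ∏ p ∈ F, (1 - (p:ℝ)^(-s))⁻¹ ≤ ∏ p ∈ F, Real.exp (lam * ((p:ℝ)-1)^(-s)) := by
      refine Finset.prod_le_prod (fun p hp => ?_) (fun p hp => ?_)
      · exact inv_nonneg.mpr (by linarith [hplt1 (hA p (hF p hp))])
      · exact aux_factor hs0 hs1 (hA p (hF p hp))
    rw [← Real.exp_sum, ← Finset.mul_sum] at h1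
    refine h1.trans (Real.exp_le_exp.mpr ?_)
    have hlam : 0 < lam := by
      have : (1:ℝ) < (2:ℝ)^s :=
        Real.one_lt_rpow_iff_of_pos (by norm_num) |>.mpr (Or.inl ⟨by norm_num, hs0⟩)
      exact one_div_pos.mpr (by linarith)
    exact mul_le_mul_of_nonneg_left (hsumF F hF) hlam.le
  -- partial sums of g are bounded by C
  have hC : ∀ n : ℕ, ∑ i ∈ Finset.range n, g i ≤ C := by
    intro n
    set F : Finset ℕ := (Finset.range n).filter (fun p => p ∈ A) with hFdef
    have hgeo := EulerProduct.summable_and_hasSum_factoredNumbers_prod_filter_prime_geometric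
      (f := (fhom s hs0 : ℕ →* ℝ)) hnorm1 F
    have hsub : Summable (fun m : Nat.factoredNumbers F => f0 m) := by
      refine Summable.of_norm ?_
      exact hgeo.1
    have hfacsum : Summable ((Nat.factoredNumbers F).indicator f0) :=
      summable_subtype_iff_indicator.mp hsub
    have hfac_nonneg : ∀ i, 0 ≤ (Nat.factoredNumbers F).indicator f0 i := fun i =>
      Set.indicator_nonneg (fun j _ => Real.rpow_nonneg (Nat.cast_nonneg j) _) i
    have hpoint : ∀ i ∈ Finset.range n, g i ≤ (Nat.factoredNumbers F).indicator f0 i := by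
      intro i hi
      rw [hgapp]
      by_cases hiT : i ∈ T
      · have hifac : i ∈ Nat.factoredNumbers F := by
          refine Nat.mem_factoredNumbers.mpr ⟨hiT.1.ne', fun p hp => ?_⟩
          have hpp := Nat.prime_of_mem_primeFactorsList hp
          have hpd := Nat.dvd_of_mem_primeFactorsList hp
          have hpA := hiT.2 p hpp hpd
          have hpn : p < n := lt_of_le_of_lt (Nat.le_of_dvd hiT.1 hpd) (Finset.mem_range.mp hi)
          exact Finset.mem_filter.mpr ⟨Finset.mem_range.mpr hpn, hpA⟩
        rw [Set.indicator_of_mem hiT, Set.indicator_of_mem hifac]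
      · rw [Set.indicator_of_notMem hiT]
        exact hfac_nonneg i
    calc ∑ i ∈ Finset.range n, g i
        ≤ ∑ i ∈ Finset.range n, (Nat.factoredNumbers F).indicator f0 i :=
          Finset.sum_le_sum hpoint
      _ ≤ ∑' i, (Nat.factoredNumbers F).indicator f0 i :=
          Summable.sum_le_tsum _ (fun i _ => hfac_nonneg i) hfacsum
      _ = ∑' m : Nat.factoredNumbers F, f0 m := (_root_.tsum_subtype _ _).symm
      _ = ∏ p ∈ F.filter Nat.Prime, (1 - f0 p)⁻¹ := hgeo.2.tsum_eq
      _ ≤ C := hprodF _ (fun p hp => (Finset.mem_filter.mp (Finset.mem_filter.mp hp).1).2)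
  -- summability of g
  have hgsummable : Summable (fun n => g n) := summable_of_sum_range_le hg_nonneg hC
  have hgnorm : Summable (fun n => ‖g n‖) :=
    hgsummable.congr (fun n => (Real.norm_of_nonneg (hg_nonneg n)).symm)
  -- Euler product over all primes
  have heuler : ∏' p : Nat.Primes, (1 - g p)⁻¹ = ∑' n, g n :=
    EulerProduct.eulerProduct_completely_multiplicative_tprod hgnorm
  -- convert the product over primes into a product over A
  have hind : {n : ℕ | Nat.Prime n}.mulIndicator (fun n => (1 - g n)⁻¹) =
      A.mulIndicator (fun n => (1 - f0 n)⁻¹) := by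
    funext n
    by_cases hnA : n ∈ A
    · have hp := hA n hnA
      rw [Set.mulIndicator_of_mem (show n ∈ {n : ℕ | Nat.Prime n} from hp), Set.mulIndicator_of_mem hnA, hgapp,
        Set.indicator_of_mem]
      exact ⟨hp.pos, fun q hq hd => by rwa [(Nat.prime_dvd_prime_iff_eq hq hp).mp hd]⟩
    · rw [Set.mulIndicator_of_notMem hnA]
      by_cases hp : n.Prime
      · rw [Set.mulIndicator_of_mem (show n ∈ {n : ℕ | Nat.Prime n} from hp), hgapp, Set.indicator_of_notMem, sub_zero, inv_one]
        exact fun h => hnA (h.2 n hp dvd_rfl)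
      · rw [Set.mulIndicator_of_notMem (show n ∉ {n : ℕ | Nat.Prime n} from hp)]
  have hconv : ∏' p : Nat.Primes, (1 - g p)⁻¹ = ∏' p : A, (1 - ((p:ℕ):ℝ)^(-s))⁻¹ := by
    rw [show (∏' p : Nat.Primes, (1 - g p)⁻¹)
        = ∏' p : ↥{n : ℕ | Nat.Prime n}, (fun n => (1 - g n)⁻¹) ↑p from rfl,
      _root_.tprod_subtype {n : ℕ | Nat.Prime n} (fun n => (1 - g n)⁻¹), hind,
      ← _root_.tprod_subtype A (fun n => (1 - f0 n)⁻¹)]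
  have htsub : (∑' m : {n : ℕ // 0 < n ∧ ∀ p : ℕ, Nat.Prime p → p ∣ n → p ∈ A},
      ((m : ℕ) : ℝ) ^ (-s)) = ∑' n, g n := by
    rw [show (∑' m : {n : ℕ // 0 < n ∧ ∀ p : ℕ, Nat.Prime p → p ∣ n → p ∈ A},
        ((m : ℕ) : ℝ) ^ (-s)) = ∑' m : ↥T, f0 ↑m from rfl, _root_.tsum_subtype T f0]
    exact tsum_congr (fun n => (hgapp n).symm)
  constructor
  · rw [htsub, ← heuler, hconv]
  · rw [← hconv, heuler]
    exact Real.tsum_le_of_sum_range_le hg_nonneg hC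
end

section
/- With P_h and V_h(s) = ∑_{p ∈ P_h} (p−1)^{-s} as defined, for every h ≥ 1 and every s with 0 < s ≤ 1, V_h(s) is finite; moreover V_h(s) ≤ exp(λ(s) V_{h−1}(s)) for h ≥ 2, where λ(s) = 1/(2^s−1). -/
open Finset in
lemma aux_concave9 {s u : ℝ} (hs0 : 0 < s) (hs1 : s ≤ 1) (hu0 : 0 < u) (hu1 : u ≤ 1) :
    (2:ℝ) ^ s + u ^ s ≤ (1 + u) ^ s + 1 := by
  have hc := Real.concaveOn_rpow hs0.le hs1
  have h2u : (0:ℝ) < 2 - u := by linarith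
  set a : ℝ := 1 / (2 - u) with ha
  have ha0 : 0 < a := by positivity
  have ha1 : a ≤ 1 := by rw [ha, div_le_one h2u]; linarith

  have haw : a * (2 - u) = 1 := by rw [ha, one_div, inv_mul_cancel₀ h2u.ne']
  have h1 := hc.2 (Set.mem_Ici.mpr (by norm_num : (0:ℝ) ≤ 2))
    (Set.mem_Ici.mpr hu0.le) ha0.le (by linarith : 0 ≤ 1 - a) (by ring)
  have h2 := hc.2 (Set.mem_Ici.mpr (by norm_num : (0:ℝ) ≤ 2))
    (Set.mem_Ici.mpr hu0.le) (by linarith : 0 ≤ 1 - a) ha0.le (by ring)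
  simp only [smul_eq_mul] at h1 h2
  have e1 : a * 2 + (1 - a) * u = 1 + u := by nlinarith [haw]
  have e2 : (1 - a) * 2 + a * u = 1 := by nlinarith [haw]
  rw [e1] at h1
  rw [e2, Real.one_rpow] at h2
  nlinarith [h1, h2]

lemma aux_factor9 {s x : ℝ} (hs0 : 0 < s) (hs1 : s ≤ 1) (hx : 2 ≤ x) :
    (1 - x ^ (-s))⁻¹ ≤ Real.exp (1 / ((2:ℝ) ^ s - 1) * (x - 1) ^ (-s)) := by
  have h2s : 1 < (2:ℝ) ^ s :=
    (Real.one_lt_rpow_iff_of_pos two_pos).mpr (Or.inl ⟨one_lt_two, hs0⟩)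
  have hx1 : (1:ℝ) ≤ x - 1 := by linarith
  have hx0 : (0:ℝ) < x := by linarith
  have hxs : (2:ℝ) ^ s ≤ x ^ s := Real.rpow_le_rpow (by norm_num) hx hs0.le
  have hxs1 : 1 < x ^ s := lt_of_lt_of_le h2s hxs
  -- key: (2^s - 1) * (x-1)^s ≤ x^s - 1
  have hu0 : 0 < 1 / (x - 1) := by positivity
  have hu1 : 1 / (x - 1) ≤ 1 := by rw [div_le_one (by linarith)]; linarith
  have hkey : ((2:ℝ) ^ s - 1) * (x - 1) ^ s ≤ x ^ s - 1 := by
    have h := aux_concave9 hs0 hs1 hu0 hu1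
    have hx1' : (0:ℝ) < x - 1 := by linarith
    have hps : (0:ℝ) < (x - 1) ^ s := Real.rpow_pos_of_pos hx1' s
    have e1 : (1 / (x - 1)) ^ s * (x - 1) ^ s = 1 := by
      rw [← Real.mul_rpow hu0.le hx1'.le]
      rw [one_div_mul_cancel (by linarith), Real.one_rpow]
    have e2 : (1 + 1 / (x - 1)) ^ s * (x - 1) ^ s = x ^ s := by
      rw [← Real.mul_rpow (by positivity) hx1'.le]
      congr 1
      field_simp
      ring
    nlinarith [h, hps, e1, e2]
  have hxins : x ^ (-s) = (x ^ s)⁻¹ := by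
    rw [Real.rpow_neg hx0.le]
  have h1r : (1 - x ^ (-s))⁻¹ = 1 + (x ^ s - 1)⁻¹ := by
    have hne : x ^ s - 1 ≠ 0 := sub_ne_zero.mpr hxs1.ne'
    have hne2 : x ^ s ≠ 0 := by positivity
    rw [hxins]
    field_simp
    ring
  rw [h1r]
  have hps : (0:ℝ) < (x - 1) ^ s := Real.rpow_pos_of_pos (by linarith) s
  have hineq : (x ^ s - 1)⁻¹ ≤ 1 / ((2:ℝ) ^ s - 1) * (x - 1) ^ (-s) := by
    have hrw : 1 / ((2:ℝ) ^ s - 1) * (x - 1) ^ (-s) = (((2:ℝ) ^ s - 1) * (x - 1) ^ s)⁻¹ := by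
      rw [Real.rpow_neg (by linarith : (0:ℝ) ≤ x - 1)]
      rw [mul_inv, one_div]
    rw [hrw]
    apply inv_anti₀
    · nlinarith
    · exact hkey
  calc 1 + (x ^ s - 1)⁻¹ ≤ 1 + 1 / ((2:ℝ) ^ s - 1) * (x - 1) ^ (-s) := by linarith
    _ ≤ Real.exp (1 / ((2:ℝ) ^ s - 1) * (x - 1) ^ (-s)) := by
        have := Real.add_one_le_exp (1 / ((2:ℝ) ^ s - 1) * (x - 1) ^ (-s))
        linarith

open Finset in
lemma lemB9 {s : ℝ} (hs0 : 0 < s) :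
    ∀ Q : Finset ℕ, (∀ q ∈ Q, Nat.Prime q) →
      ∀ G : Finset ℕ, (∀ n ∈ G, 0 < n ∧ n.primeFactors ⊆ Q) →
        ∑ n ∈ G, (n : ℝ) ^ (-s) ≤ ∏ q ∈ Q, (1 - (q : ℝ) ^ (-s))⁻¹ := by
  intro Q
  induction Q using Finset.induction_on with
  | empty =>
    intro _ G hG
    have hsub : G ⊆ {1} := by
      intro n hn
      obtain ⟨hn0, hnf⟩ := hG n hn
      have : n.primeFactors = ∅ := Finset.subset_empty.mp hnf
      rcases Nat.primeFactors_eq_empty.mp this with h | h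
      · omega
      · simp [h]
    calc ∑ n ∈ G, (n : ℝ) ^ (-s) ≤ ∑ n ∈ ({1} : Finset ℕ), (n : ℝ) ^ (-s) := by
          apply Finset.sum_le_sum_of_subset_of_nonneg hsub
          intro i _ _
          positivity
      _ = 1 := by norm_num
      _ = _ := by simp
  | @insert a Q' haQ IH =>
    intro hQ G hG
    have hap : a.Prime := hQ a (mem_insert_self a Q')
    have ha2 : 2 ≤ a := hap.two_le
    have ha1 : (1:ℝ) < (a:ℝ) := by exact_mod_cast ha2.trans_lt' one_lt_two
    set r : ℝ := (a : ℝ) ^ (-s) with hr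
    have hr0 : 0 ≤ r := Real.rpow_nonneg (by positivity) _
    have hr1 : r < 1 := Real.rpow_lt_one_of_one_lt_of_neg ha1 (by linarith)
    set G' : Finset ℕ := G.image (fun n => ordCompl[a] n) with hG'
    set V : ℕ := (G.sup fun n => n.factorization a) + 1 with hV
    have hG'prop : ∀ m ∈ G', 0 < m ∧ m.primeFactors ⊆ Q' := by
      intro m hm
      obtain ⟨n, hn, rfl⟩ := Finset.mem_image.mp hm
      obtain ⟨hn0, hnf⟩ := hG n hn
      refine ⟨Nat.ordCompl_pos a hn0.ne', ?_⟩
      intro q hq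
      have hqn : q ∈ n.primeFactors :=
        Nat.primeFactors_mono (Nat.ordCompl_dvd n a) hn0.ne' hq
      have hqa : q ≠ a := by
        rintro rfl
        exact Nat.not_dvd_ordCompl hap hn0.ne' (Nat.dvd_of_mem_primeFactors hq)
      rcases Finset.mem_insert.mp (hnf hqn) with h | h
      · exact absurd h hqa
      · exact h
    -- rewrite sum over G via the injection
    have key : ∀ n ∈ G, (n : ℝ) ^ (-s)
        = r ^ (n.factorization a) * ((ordCompl[a] n : ℕ) : ℝ) ^ (-s) := by
      intro n hn
      obtain ⟨hn0, -⟩ := hG n hn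
      set v := n.factorization a
      set m := ordCompl[a] n with hm
      have hnm : n = a ^ v * m := (Nat.ordProj_mul_ordCompl_eq_self n a).symm
      have hm0 : 0 < m := Nat.ordCompl_pos a hn0.ne'
      rw [hnm]
      push_cast
      rw [Real.mul_rpow (by positivity) (by positivity)]
      congr 1
      rw [← Real.rpow_natCast ((a:ℝ)) v, ← Real.rpow_natCast r v, hr,
        ← Real.rpow_mul (by positivity), ← Real.rpow_mul (by positivity)]
      ring_nf
    have hinj : ∀ x ∈ G, ∀ y ∈ G,
        (fun n => (n.factorization a, ordCompl[a] n)) x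
          = (fun n => (n.factorization a, ordCompl[a] n)) y → x = y := by
      intro x hx y hy hxy
      simp only [Prod.mk.injEq] at hxy
      have hx' := (Nat.ordProj_mul_ordCompl_eq_self x a).symm
      have hy' := (Nat.ordProj_mul_ordCompl_eq_self y a).symm
      rw [hx', hy', hxy.2, hxy.1]
    have step1 : ∑ n ∈ G, (n : ℝ) ^ (-s)
        = ∑ p ∈ G.image (fun n => (n.factorization a, ordCompl[a] n)),
            r ^ p.1 * ((p.2 : ℕ) : ℝ) ^ (-s) := by
      rw [Finset.sum_image hinj]
      exact Finset.sum_congr rfl key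
    have hsubset : G.image (fun n => (n.factorization a, ordCompl[a] n))
        ⊆ Finset.range V ×ˢ G' := by
      intro p hp
      obtain ⟨n, hn, rfl⟩ := Finset.mem_image.mp hp
      rw [Finset.mem_product]
      constructor
      · rw [Finset.mem_range, hV]
        exact Nat.lt_succ_of_le (Finset.le_sup (f := fun n => n.factorization a) hn)
      · exact Finset.mem_image_of_mem _ hn
    have step2 : ∑ p ∈ G.image (fun n => (n.factorization a, ordCompl[a] n)),
          r ^ p.1 * ((p.2 : ℕ) : ℝ) ^ (-s)
        ≤ ∑ p ∈ Finset.range V ×ˢ G', r ^ p.1 * ((p.2 : ℕ) : ℝ) ^ (-s) := by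
      apply Finset.sum_le_sum_of_subset_of_nonneg hsubset
      intro p _ _
      positivity
    have step3 : ∑ p ∈ Finset.range V ×ˢ G', r ^ p.1 * ((p.2 : ℕ) : ℝ) ^ (-s)
        = (∑ v ∈ Finset.range V, r ^ v) * ∑ m ∈ G', (m : ℝ) ^ (-s) := by
      rw [Finset.sum_product]
      rw [Finset.sum_mul]
      exact Finset.sum_congr rfl fun x _ => by rw [Finset.mul_sum]
    have hgeom : ∑ v ∈ Finset.range V, r ^ v ≤ (1 - r)⁻¹ := by
      have := Summable.sum_le_tsum (Finset.range V) (fun i _ => by positivity)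
        (summable_geometric_of_lt_one hr0 hr1)
      rwa [tsum_geometric_of_lt_one hr0 hr1] at this
    have hIH := IH (fun q hq => hQ q (mem_insert_of_mem hq)) G' hG'prop
    have hG'nonneg : (0:ℝ) ≤ ∑ m ∈ G', (m : ℝ) ^ (-s) :=
      Finset.sum_nonneg fun m _ => by positivity
    have hgeom0 : (0:ℝ) ≤ ∑ v ∈ Finset.range V, r ^ v :=
      Finset.sum_nonneg fun v _ => by positivity
    rw [Finset.prod_insert haQ]
    calc ∑ n ∈ G, (n : ℝ) ^ (-s)
        ≤ ∑ p ∈ Finset.range V ×ˢ G', r ^ p.1 * ((p.2 : ℕ) : ℝ) ^ (-s) := by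
          rw [step1]; exact step2
      _ = (∑ v ∈ Finset.range V, r ^ v) * ∑ m ∈ G', (m : ℝ) ^ (-s) := step3
      _ ≤ (1 - r)⁻¹ * ∏ q ∈ Q', (1 - (q : ℝ) ^ (-s))⁻¹ :=
          mul_le_mul hgeom hIH hG'nonneg (inv_nonneg.mpr (by linarith))

theorem stmt_9 (P : Set ℕ) (hP : ∀ p ∈ P, Nat.Prime p)
    (hclo : ∀ p ∈ P, ∀ q : ℕ, Nat.Prime q → q ∣ p - 1 → q ∈ P)
    (H : ℕ → ℕ) (hH2 : H 2 = 1)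
    (hrec : ∀ p : ℕ, Nat.Prime p → 2 < p → H p = 1 + (p - 1).primeFactors.sup H)
    (s : ℝ) (hs0 : 0 < s) (hs1 : s ≤ 1) :
    (∀ h : ℕ, 1 ≤ h →
      Summable fun p : {p : ℕ // p ∈ P ∧ H p ≤ h} => (((p : ℕ) : ℝ) - 1) ^ (-s)) ∧
    (∀ h : ℕ, 2 ≤ h →
      (∑' p : {p : ℕ // p ∈ P ∧ H p ≤ h}, (((p : ℕ) : ℝ) - 1) ^ (-s)) ≤
        Real.exp ((1 / ((2 : ℝ) ^ s - 1)) *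
          ∑' p : {p : ℕ // p ∈ P ∧ H p ≤ h - 1}, (((p : ℕ) : ℝ) - 1) ^ (-s))) := by
  have h2s : 1 < (2:ℝ) ^ s :=
    (Real.one_lt_rpow_iff_of_pos two_pos).mpr (Or.inl ⟨one_lt_two, hs0⟩)
  have hlam0 : 0 ≤ 1 / ((2:ℝ) ^ s - 1) := by
    apply div_nonneg (by norm_num); linarith
  -- H p ≤ 1 forces p = 2
  have hP1 : ∀ p, p ∈ P → H p ≤ 1 → p = 2 := by
    intro p hp h1
    by_contra hne
    have hpp := hP p hp
    have h2p : 2 < p := lt_of_le_of_ne hpp.two_le (Ne.symm hne)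
    have hmem : 2 ∈ (p - 1).primeFactors := by
      refine Nat.mem_primeFactors.mpr ⟨Nat.prime_two, ?_, by omega⟩
      exact (Nat.Odd.sub_odd (hpp.odd_of_ne_two hne) odd_one).two_dvd
    have := Finset.le_sup (f := H) hmem
    rw [hH2] at this
    rw [hrec p hpp h2p] at h1
    omega
  -- prime factors of p-1 land in P_{h-1}
  have hfac : ∀ h : ℕ, 2 ≤ h → ∀ p, p ∈ P → H p ≤ h →
      ∀ q ∈ (p - 1).primeFactors, q ∈ P ∧ H q ≤ h - 1 := by
    intro h hh p hp hhp q hq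
    have hpp := hP p hp
    have hqp := Nat.prime_of_mem_primeFactors hq
    have hqd := Nat.dvd_of_mem_primeFactors hq
    refine ⟨hclo p hp q hqp hqd, ?_⟩
    rcases eq_or_lt_of_le hpp.two_le with h2 | h2
    · exfalso; rw [← h2] at hq; simp at hq
    · rw [hrec p hpp h2] at hhp
      have := Finset.le_sup (f := H) hq
      omega
  -- the key partial-sum bound
  have hbdd : ∀ h : ℕ, 2 ≤ h →
      Summable (fun p : {p : ℕ // p ∈ P ∧ H p ≤ h - 1} => (((p : ℕ) : ℝ) - 1) ^ (-s)) →
      ∀ F : Finset {p : ℕ // p ∈ P ∧ H p ≤ h},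
        ∑ p ∈ F, (((p : ℕ) : ℝ) - 1) ^ (-s) ≤
          Real.exp ((1 / ((2:ℝ) ^ s - 1)) *
            ∑' p : {p : ℕ // p ∈ P ∧ H p ≤ h - 1}, (((p : ℕ) : ℝ) - 1) ^ (-s)) := by
    intro h hh hsumm F
    set T := ∑' p : {p : ℕ // p ∈ P ∧ H p ≤ h - 1}, (((p : ℕ) : ℝ) - 1) ^ (-s) with hT
    have htwo : ∀ p : {p : ℕ // p ∈ P ∧ H p ≤ h}, 2 ≤ (p : ℕ) :=
      fun p => (hP p.1 p.2.1).two_le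
    set G : Finset ℕ := F.image (fun p => p.1 - 1) with hG
    set Q : Finset ℕ := F.biUnion (fun p => ((p : ℕ) - 1).primeFactors) with hQ
    have hQprime : ∀ q ∈ Q, Nat.Prime q := by
      intro q hq
      obtain ⟨p, -, hq⟩ := Finset.mem_biUnion.mp hq
      exact Nat.prime_of_mem_primeFactors hq
    have hQmem : ∀ q ∈ Q, q ∈ P ∧ H q ≤ h - 1 := by
      intro q hq
      obtain ⟨p, -, hq⟩ := Finset.mem_biUnion.mp hq
      exact hfac h hh (p : ℕ) p.2.1 p.2.2 q hq
    have hGprop : ∀ n ∈ G, 0 < n ∧ n.primeFactors ⊆ Q := by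
      intro n hn
      obtain ⟨p, hpF, rfl⟩ := Finset.mem_image.mp hn
      have h2 := htwo p
      refine ⟨by omega, ?_⟩
      rw [hQ]
      exact Finset.subset_biUnion_of_mem (fun q : {p : ℕ // p ∈ P ∧ H p ≤ h} => ((q : ℕ) - 1).primeFactors) hpF
    have hsum_eq : ∑ p ∈ F, (((p : ℕ) : ℝ) - 1) ^ (-s) = ∑ n ∈ G, (n : ℝ) ^ (-s) := by
      rw [hG, Finset.sum_image]
      · refine Finset.sum_congr rfl fun p _ => ?_
        have h2 := htwo p
        rw [Nat.cast_sub (by omega : 1 ≤ p.1), Nat.cast_one]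
      · intro x _ y _ hxy
        have hx := htwo x; have hy := htwo y
        exact Subtype.ext (by simp only at hxy; omega)
    have step1 : ∑ n ∈ G, (n : ℝ) ^ (-s) ≤ ∏ q ∈ Q, (1 - (q : ℝ) ^ (-s))⁻¹ :=
      lemB9 hs0 Q hQprime G hGprop
    have step2 : ∏ q ∈ Q, (1 - (q : ℝ) ^ (-s))⁻¹ ≤
        ∏ q ∈ Q, Real.exp ((1 / ((2:ℝ) ^ s - 1)) * (((q : ℕ) : ℝ) - 1) ^ (-s)) := by
      apply Finset.prod_le_prod
      · intro q hq
        have h2q : (2:ℝ) ≤ (q : ℝ) := by exact_mod_cast (hQprime q hq).two_le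
        have : (q:ℝ) ^ (-s) < 1 :=
          Real.rpow_lt_one_of_one_lt_of_neg (by linarith) (by linarith)
        exact inv_nonneg.mpr (by linarith)
      · intro q hq
        have h2q : (2:ℝ) ≤ (q : ℝ) := by exact_mod_cast (hQprime q hq).two_le
        exact aux_factor9 hs0 hs1 h2q
    have step3 : ∑ q ∈ Q, (((q : ℕ) : ℝ) - 1) ^ (-s) ≤ T := by
      classical
      set e : {q // q ∈ Q} → {p : ℕ // p ∈ P ∧ H p ≤ h - 1} :=
        fun q => ⟨q.1, hQmem q.1 q.2⟩ with he
      have hinj : ∀ x ∈ Q.attach, ∀ y ∈ Q.attach, e x = e y → x = y := by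
        intro x _ y _ hxy
        have h1 : (e x).1 = (e y).1 := congrArg Subtype.val hxy
        exact Subtype.ext h1
      have hkey : ∑ q ∈ Q, (((q : ℕ) : ℝ) - 1) ^ (-s)
          = ∑ x ∈ Q.attach.image e, (((x : ℕ) : ℝ) - 1) ^ (-s) := by
        rw [Finset.sum_image hinj]
        exact (Finset.sum_attach Q fun q : ℕ => (((q : ℕ) : ℝ) - 1) ^ (-s)).symm
      rw [hkey, hT]
      exact Summable.sum_le_tsum _ (fun p _ => by
        have := (hP p.1 p.2.1).two_le
        have h1 : (1:ℝ) ≤ ((p : ℕ) : ℝ) - 1 := by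
          have : (2:ℝ) ≤ ((p : ℕ) : ℝ) := by exact_mod_cast this
          linarith
        positivity) hsumm
    calc ∑ p ∈ F, (((p : ℕ) : ℝ) - 1) ^ (-s)
        ≤ ∏ q ∈ Q, Real.exp ((1 / ((2:ℝ) ^ s - 1)) * (((q : ℕ) : ℝ) - 1) ^ (-s)) := by
          rw [hsum_eq]; exact le_trans step1 step2
      _ = Real.exp (∑ q ∈ Q, (1 / ((2:ℝ) ^ s - 1)) * (((q : ℕ) : ℝ) - 1) ^ (-s)) :=
          (Real.exp_sum Q _).symm
      _ = Real.exp ((1 / ((2:ℝ) ^ s - 1)) * ∑ q ∈ Q, (((q : ℕ) : ℝ) - 1) ^ (-s)) := by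
          rw [Finset.mul_sum]
      _ ≤ Real.exp ((1 / ((2:ℝ) ^ s - 1)) * T) := by
          apply Real.exp_le_exp.mpr
          exact mul_le_mul_of_nonneg_left step3 hlam0
  -- nonnegativity of the summand
  have hnn : ∀ h : ℕ, ∀ p : {p : ℕ // p ∈ P ∧ H p ≤ h}, 0 ≤ (((p : ℕ) : ℝ) - 1) ^ (-s) := by
    intro h p
    have := (hP p.1 p.2.1).two_le
    have h1 : (0:ℝ) ≤ ((p : ℕ) : ℝ) - 1 := by
      have : (2:ℝ) ≤ ((p : ℕ) : ℝ) := by exact_mod_cast this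
      linarith
    positivity
  -- summability for all h ≥ 1
  have hsummable : ∀ h : ℕ, 1 ≤ h →
      Summable (fun p : {p : ℕ // p ∈ P ∧ H p ≤ h} => (((p : ℕ) : ℝ) - 1) ^ (-s)) := by
    intro h
    induction h with
    | zero => omega
    | succ n IH =>
      intro _
      rcases Nat.eq_zero_or_pos n with rfl | hn
      · haveI : Subsingleton {p : ℕ // p ∈ P ∧ H p ≤ 1} :=
          ⟨fun a b => Subtype.ext (by rw [hP1 a.1 a.2.1 a.2.2, hP1 b.1 b.2.1 b.2.2])⟩
        exact Summable.of_finite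
      · have hsn := IH hn
        exact summable_of_sum_le (fun p => hnn (n + 1) p)
          (hbdd (n + 1) (by omega) hsn)
  refine ⟨hsummable, ?_⟩
  intro h hh
  exact Summable.tsum_le_of_sum_le (hsummable h (by omega))
    (hbdd h hh (hsummable (h - 1) (by omega)))
end

section
/- Let A ⊆ B be two sets of primes with ∑_{q∈B}(q−1)^{-s} finite for some 0 < s ≤ 1. Let T̃ be the set of integers n all of whose prime factors lie in B, such that either some prime in B∖A divides n to a power at least 2, or at least two distinct primes of B∖A divide n. Then ∑_{n∈T̃} n^{-s} ≤ 2 λ(s)² (V_B − V_A)² e^{λ(s) V_B}, where V_A = ∑_{q∈A}(q−1)^{-s}, V_B = ∑_{q∈B}(q−1)^{-s}, λ(s)=1/(2^s−1). -/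
-- Key inequality: for x ≥ 2, 0 < s ≤ 1:  (2^s - 1) * (x-1)^s ≤ x^s - 1
lemma aux_key_ineq {s : ℝ} (hs0 : 0 < s) (hs1 : s ≤ 1) {x : ℝ} (hx : 2 ≤ x) :
    ((2 : ℝ) ^ s - 1) * (x - 1) ^ s ≤ x ^ s - 1 := by
  set a : ℝ := x - 1 with ha
  have ha1 : (1 : ℝ) ≤ a := by simp [ha]; linarith
  have ha0 : (0 : ℝ) < a := by linarith
  have h2a : (0 : ℝ) < 2 * a - 1 := by linarith
  set t : ℝ := a / (2 * a - 1) with ht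
  have ht0 : 0 ≤ t := by positivity
  have ht1 : t ≤ 1 := by
    rw [ht, div_le_one h2a]; linarith
  have hconc := Real.concaveOn_rpow hs0.le hs1
  have hmem1 : (2 * a : ℝ) ∈ Set.Ici (0:ℝ) := by simp; linarith
  have hmem2 : (1 : ℝ) ∈ Set.Ici (0:ℝ) := by simp
  have hsum1 : t + (1 - t) = 1 := by ring
  have hsum2 : (1 - t) + t = 1 := by ring
  have h1 := hconc.2 hmem1 hmem2 ht0 (by linarith : (0:ℝ) ≤ 1 - t) hsum1
  have h2 := hconc.2 hmem1 hmem2 (by linarith : (0:ℝ) ≤ 1 - t) ht0 hsum2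
  have htt : t * (2 * a - 1) = a := by rw [ht]; exact div_mul_cancel₀ a h2a.ne'
  have he1 : t * (2 * a) + (1 - t) * 1 = a + 1 := by
    linear_combination htt
  have he2 : (1 - t) * (2 * a) + t * 1 = a := by
    linear_combination (-1 : ℝ) * htt
  simp only [smul_eq_mul] at h1 h2
  rw [he1] at h1
  rw [he2] at h2
  have hx1 : x = a + 1 := by rw [ha]; ring
  have h2as : (2 * a) ^ s = 2 ^ s * a ^ s := Real.mul_rpow (by norm_num) ha0.le
  have h1s : (1 : ℝ) ^ s = 1 := Real.one_rpow s
  rw [h2as, h1s] at h1 h2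
  rw [hx1]
  nlinarith [h1, h2]

lemma aux_decomp (A B : Set ℕ) (hB : ∀ p ∈ B, Nat.Prime p) (n : ℕ) (hn : 0 < n)
    (h : (∃ p : ℕ, p ∈ B ∧ p ∉ A ∧ p ^ 2 ∣ n) ∨
         (∃ p q : ℕ, p ∈ B ∧ p ∉ A ∧ q ∈ B ∧ q ∉ A ∧ p ≠ q ∧ p ∣ n ∧ q ∣ n)) :
    ∃ pq : ℕ × ℕ, ∃ m : ℕ, (pq.1 ∈ B ∧ pq.1 ∉ A) ∧ (pq.2 ∈ B ∧ pq.2 ∉ A) ∧ 0 < m ∧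
      n = pq.1 * pq.2 * m := by
  rcases h with ⟨p, hpB, hpA, hdvd⟩ | ⟨p, q, hpB, hpA, hqB, hqA, hne, hpd, hqd⟩
  · refine ⟨(p, p), n / p ^ 2, ⟨hpB, hpA⟩, ⟨hpB, hpA⟩, ?_, ?_⟩
    · exact Nat.div_pos (Nat.le_of_dvd hn hdvd) (pow_pos (hB p hpB).pos 2)
    · rw [show p * p * (n / p ^ 2) = p ^ 2 * (n / p ^ 2) by ring, Nat.mul_div_cancel' hdvd]
  · have hco : Nat.Coprime p q := (Nat.coprime_primes (hB p hpB) (hB q hqB)).mpr hne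
    have hdvd : p * q ∣ n := hco.mul_dvd_of_dvd_of_dvd hpd hqd
    refine ⟨(p, q), n / (p * q), ⟨hpB, hpA⟩, ⟨hqB, hqA⟩, ?_, ?_⟩
    · exact Nat.div_pos (Nat.le_of_dvd hn hdvd) (Nat.mul_pos (hB p hpB).pos (hB q hqB).pos)
    · rw [Nat.mul_div_cancel' hdvd]


lemma aux_euler {s : ℝ} (hs0 : 0 < s) (hs1 : s ≤ 1) (B : Set ℕ) (hB : ∀ p ∈ B, Nat.Prime p)
    (hW : Summable (Set.indicator B (fun n : ℕ => ((n : ℝ) - 1) ^ (-s))))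
    (F : Finset ℕ) (hFB : ∀ p ∈ F, p ∈ B) :
    Summable (fun m : Nat.factoredNumbers F => ((m : ℕ) : ℝ) ^ (-s)) ∧
    (∑' m : Nat.factoredNumbers F, ((m : ℕ) : ℝ) ^ (-s)) ≤
      Real.exp ((1 / ((2 : ℝ) ^ s - 1)) *
        ∑' n : ℕ, Set.indicator B (fun n : ℕ => ((n : ℝ) - 1) ^ (-s)) n) := by
  classical
  set W : ℕ → ℝ := Set.indicator B (fun n : ℕ => ((n : ℝ) - 1) ^ (-s)) with hWdef
  have h2s : (1 : ℝ) < 2 ^ s := by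
    have := Real.rpow_lt_rpow_of_exponent_lt (by norm_num : (1:ℝ) < 2) hs0
    simpa using this
  have hc : (0 : ℝ) < 2 ^ s - 1 := by linarith
  set L : ℝ := 1 / ((2 : ℝ) ^ s - 1) with hLdef
  have hL0 : 0 ≤ L := by positivity
  set pw : ℕ → ℝ := fun n => ((n : ℝ)) ^ (-s) with hpwdef
  have hpw0 : ∀ n, 0 ≤ pw n := fun n => Real.rpow_nonneg (Nat.cast_nonneg n) _
  have hWnonneg : ∀ n, 0 ≤ W n := by
    intro n
    rw [hWdef]
    by_cases h : n ∈ B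
    · rw [Set.indicator_of_mem h]
      have := (hB n h).two_le
      have : (1:ℝ) ≤ (n:ℝ) - 1 := by
        have : (2:ℝ) ≤ (n:ℝ) := by exact_mod_cast this
        linarith
      exact Real.rpow_nonneg (by linarith) _
    · rw [Set.indicator_of_notMem h]
  let fhom : ℕ →* ℝ :=
    { toFun := pw
      map_one' := by simp [hpwdef]
      map_mul' := by
        intro m n
        simp only [hpwdef, Nat.cast_mul]
        exact Real.mul_rpow (Nat.cast_nonneg m) (Nat.cast_nonneg n) }
  have hnorm : ∀ {p : ℕ}, p.Prime → ‖fhom p‖ < 1 := by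
    intro p hp
    have h1p : (1 : ℝ) < (p : ℝ) := by exact_mod_cast hp.one_lt
    have := Real.rpow_lt_one_of_one_lt_of_neg h1p (neg_neg_of_pos hs0)
    show ‖pw p‖ < 1
    rw [Real.norm_eq_abs, abs_of_nonneg (hpw0 p)]
    exact this
  obtain ⟨hsumN, hhs⟩ :=
    EulerProduct.summable_and_hasSum_factoredNumbers_prod_filter_prime_geometric
      (f := fhom) hnorm F
  have hsumm : Summable (fun m : Nat.factoredNumbers F => pw m) := Summable.of_norm hsumN
  refine ⟨hsumm, ?_⟩
  have htsum_eq : (∑' m : Nat.factoredNumbers F, ((m : ℕ) : ℝ) ^ (-s)) =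
      ∏ p ∈ F.filter Nat.Prime, (1 - fhom p)⁻¹ := hhs.tsum_eq
  rw [htsum_eq]
  -- per-factor bound
  have hfac : ∀ p ∈ F.filter Nat.Prime, (1 - fhom p)⁻¹ ≤ Real.exp (L * W p) := by
    intro p hpF
    rw [Finset.mem_filter] at hpF
    obtain ⟨hpF, hp⟩ := hpF
    have hpB : p ∈ B := hFB p hpF
    have hp2 : (2 : ℝ) ≤ (p : ℝ) := by exact_mod_cast hp.two_le
    have hu1 : (1 : ℝ) < (p : ℝ) ^ s := by
      calc (1:ℝ) < 2 ^ s := h2s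
      _ ≤ (p : ℝ) ^ s := Real.rpow_le_rpow (by norm_num) hp2 hs0.le
    have hu0 : (0 : ℝ) < (p : ℝ) ^ s := by linarith
    have hpwp : fhom p = ((p : ℝ) ^ s)⁻¹ := by
      show pw p = _
      rw [hpwdef]
      exact Real.rpow_neg (by positivity) s
    have hkey := aux_key_ineq hs0 hs1 hp2
    have hq0 : (0 : ℝ) < ((p : ℝ) - 1) ^ s := Real.rpow_pos_of_pos (by linarith) s
    have hWp : W p = (((p : ℝ) - 1) ^ s)⁻¹ := by
      rw [hWdef, Set.indicator_of_mem hpB]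
      exact Real.rpow_neg (by linarith) s
    have hstep : (1 - fhom p)⁻¹ = 1 + ((p : ℝ) ^ s - 1)⁻¹ := by
      have hne : ((p : ℝ) ^ s - 1) ≠ 0 := by linarith
      have hne0 : ((p : ℝ) ^ s) ≠ 0 := by linarith
      rw [hpwp, show (1 : ℝ) - ((p : ℝ) ^ s)⁻¹ = ((p : ℝ) ^ s - 1) * ((p : ℝ) ^ s)⁻¹ by
        field_simp, mul_inv, inv_inv]
      calc ((p : ℝ) ^ s - 1)⁻¹ * (p : ℝ) ^ s
          = ((p : ℝ) ^ s - 1)⁻¹ * (((p : ℝ) ^ s - 1) + 1) := by ring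
        _ = 1 + ((p : ℝ) ^ s - 1)⁻¹ := by
            rw [mul_add, inv_mul_cancel₀ hne, mul_one]
    have hstep2 : ((p : ℝ) ^ s - 1)⁻¹ ≤ L * W p := by
      have h1 : ((p : ℝ) ^ s - 1)⁻¹ ≤ ((2 ^ s - 1) * ((p : ℝ) - 1) ^ s)⁻¹ := by
        apply inv_anti₀ (by positivity) hkey
      calc ((p : ℝ) ^ s - 1)⁻¹ ≤ ((2 ^ s - 1) * ((p : ℝ) - 1) ^ s)⁻¹ := h1
        _ = L * W p := by rw [mul_inv, hWp, hLdef, one_div]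
    calc (1 - fhom p)⁻¹ = 1 + ((p : ℝ) ^ s - 1)⁻¹ := hstep
      _ ≤ 1 + L * W p := by linarith
      _ ≤ Real.exp (L * W p) := by linarith [Real.add_one_le_exp (L * W p)]
  calc ∏ p ∈ F.filter Nat.Prime, (1 - fhom p)⁻¹
      ≤ ∏ p ∈ F.filter Nat.Prime, Real.exp (L * W p) := by
        apply Finset.prod_le_prod _ hfac
        intro p hpF
        rw [Finset.mem_filter] at hpF
        have h1 : fhom p < 1 := by
          have := hnorm hpF.2
          rw [Real.norm_eq_abs] at this
          exact (le_abs_self _).trans_lt this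
        exact inv_nonneg.mpr (by linarith)
      _ = Real.exp (∑ p ∈ F.filter Nat.Prime, L * W p) := (Real.exp_sum _ _).symm
      _ = Real.exp (L * ∑ p ∈ F.filter Nat.Prime, W p) := by rw [Finset.mul_sum]
      _ ≤ Real.exp (L * ∑' n : ℕ, W n) := by
        apply Real.exp_le_exp.mpr
        apply mul_le_mul_of_nonneg_left _ hL0
        exact Summable.sum_le_tsum _ (fun i _ => hWnonneg i) hW




theorem stmt_10 (A B : Set ℕ) (hAB : A ⊆ B) (hB : ∀ p ∈ B, Nat.Prime p)
    (s : ℝ) (hs0 : 0 < s) (hs1 : s ≤ 1)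
    (hsum : Summable fun q : B => (((q : ℕ) : ℝ) - 1) ^ (-s)) :
    (∑' n : {n : ℕ // 0 < n ∧ (∀ p : ℕ, Nat.Prime p → p ∣ n → p ∈ B) ∧
        ((∃ p : ℕ, p ∈ B ∧ p ∉ A ∧ p ^ 2 ∣ n) ∨
         (∃ p q : ℕ, p ∈ B ∧ p ∉ A ∧ q ∈ B ∧ q ∉ A ∧ p ≠ q ∧ p ∣ n ∧ q ∣ n))},
      ((n : ℕ) : ℝ) ^ (-s)) ≤
      2 * (1 / ((2 : ℝ) ^ s - 1)) ^ 2 *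
        ((∑' q : B, (((q : ℕ) : ℝ) - 1) ^ (-s)) -
          ∑' q : A, (((q : ℕ) : ℝ) - 1) ^ (-s)) ^ 2 *
        Real.exp ((1 / ((2 : ℝ) ^ s - 1)) * ∑' q : B, (((q : ℕ) : ℝ) - 1) ^ (-s)) := by
  classical
  have h2s : (1 : ℝ) < 2 ^ s := by
    have := Real.rpow_lt_rpow_of_exponent_lt (by norm_num : (1:ℝ) < 2) hs0
    simpa using this
  have hc : (0 : ℝ) < 2 ^ s - 1 := by linarith
  have h2le : (2 : ℝ) ^ s ≤ 2 := by
    have := Real.rpow_le_rpow_of_exponent_le (by norm_num : (1:ℝ) ≤ 2) hs1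
    simpa using this
  set L : ℝ := 1 / ((2 : ℝ) ^ s - 1) with hLdef
  have hL0 : 0 ≤ L := by positivity
  have hL1 : 1 ≤ L := by
    rw [hLdef, le_div_iff₀ hc, one_mul]
    linarith
  set w : ℕ → ℝ := fun n => ((n : ℝ) - 1) ^ (-s) with hwdef
  set W : ℕ → ℝ := Set.indicator B w with hWdef
  set WA : ℕ → ℝ := Set.indicator A w with hWAdef
  set WD : ℕ → ℝ := Set.indicator (B \ A) w with hWDdef
  have hwB : ∀ n ∈ B, 0 ≤ w n := by
    intro n hn
    have h2 : (2 : ℝ) ≤ (n : ℝ) := by exact_mod_cast (hB n hn).two_le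
    exact Real.rpow_nonneg (by linarith) _
  have hWnonneg : ∀ n, 0 ≤ W n := by
    intro n; rw [hWdef]
    by_cases h : n ∈ B
    · rw [Set.indicator_of_mem h]; exact hwB n h
    · rw [Set.indicator_of_notMem h]
  have hWAnonneg : ∀ n, 0 ≤ WA n := by
    intro n; rw [hWAdef]
    by_cases h : n ∈ A
    · rw [Set.indicator_of_mem h]; exact hwB n (hAB h)
    · rw [Set.indicator_of_notMem h]
  have hWDnonneg : ∀ n, 0 ≤ WD n := by
    intro n; rw [hWDdef]
    by_cases h : n ∈ B \ A
    · rw [Set.indicator_of_mem h]; exact hwB n h.1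
    · rw [Set.indicator_of_notMem h]
  have hW : Summable W := summable_subtype_iff_indicator.mp hsum
  have hWAle : ∀ n, WA n ≤ W n := by
    intro n; rw [hWAdef, hWdef]
    by_cases h : n ∈ A
    · rw [Set.indicator_of_mem h, Set.indicator_of_mem (hAB h)]
    · rw [Set.indicator_of_notMem h]; exact hWnonneg n
  have hWDle : ∀ n, WD n ≤ W n := by
    intro n; rw [hWDdef, hWdef]
    by_cases h : n ∈ B \ A
    · rw [Set.indicator_of_mem h, Set.indicator_of_mem h.1]
    · rw [Set.indicator_of_notMem h]; exact hWnonneg n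
  have hWA : Summable WA := Summable.of_nonneg_of_le hWAnonneg hWAle hW
  have hWD : Summable WD := Summable.of_nonneg_of_le hWDnonneg hWDle hW
  have hsplit : ∀ n, W n = WA n + WD n := by
    intro n
    rw [hWdef, hWAdef, hWDdef]
    by_cases hA : n ∈ A
    · rw [Set.indicator_of_mem hA, Set.indicator_of_mem (hAB hA),
        Set.indicator_of_notMem (fun h => h.2 hA)]
      ring
    · by_cases hBn : n ∈ B
      · rw [Set.indicator_of_mem hBn, Set.indicator_of_notMem hA,
          Set.indicator_of_mem ((Set.mem_diff n).mpr ⟨hBn, hA⟩)]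
        ring
      · rw [Set.indicator_of_notMem hBn, Set.indicator_of_notMem hA,
          Set.indicator_of_notMem (fun h => hBn h.1)]
        ring
  have hVB : (∑' q : B, (((q : ℕ) : ℝ) - 1) ^ (-s)) = ∑' n : ℕ, W n := tsum_subtype B w
  have hVA : (∑' q : A, (((q : ℕ) : ℝ) - 1) ^ (-s)) = ∑' n : ℕ, WA n := tsum_subtype A w
  have htsum_split : (∑' n : ℕ, W n) = (∑' n : ℕ, WA n) + ∑' n : ℕ, WD n := by
    rw [← Summable.tsum_add hWA hWD]
    exact tsum_congr hsplit
  have hVD0 : 0 ≤ ∑' n : ℕ, WD n := tsum_nonneg hWDnonneg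
  rw [hVB, hVA]
  have hdiff : (∑' n : ℕ, W n) - (∑' n : ℕ, WA n) = ∑' n : ℕ, WD n := by
    rw [htsum_split]; ring
  rw [hdiff]
  set vB : ℝ := ∑' n : ℕ, W n with hvB
  set vD : ℝ := ∑' n : ℕ, WD n with hvD
  -- the bound for every finite subset
  have hnonneg : ∀ n : {n : ℕ // 0 < n ∧ (∀ p : ℕ, Nat.Prime p → p ∣ n → p ∈ B) ∧
        ((∃ p : ℕ, p ∈ B ∧ p ∉ A ∧ p ^ 2 ∣ n) ∨
         (∃ p q : ℕ, p ∈ B ∧ p ∉ A ∧ q ∈ B ∧ q ∉ A ∧ p ≠ q ∧ p ∣ n ∧ q ∣ n))},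
      0 ≤ ((n : ℕ) : ℝ) ^ (-s) := fun n => Real.rpow_nonneg (Nat.cast_nonneg _) _
  have hmain : ∀ U : Finset {n : ℕ // 0 < n ∧ (∀ p : ℕ, Nat.Prime p → p ∣ n → p ∈ B) ∧
        ((∃ p : ℕ, p ∈ B ∧ p ∉ A ∧ p ^ 2 ∣ n) ∨
         (∃ p q : ℕ, p ∈ B ∧ p ∉ A ∧ q ∈ B ∧ q ∉ A ∧ p ≠ q ∧ p ∣ n ∧ q ∣ n))},
      (∑ n ∈ U, ((n : ℕ) : ℝ) ^ (-s)) ≤ 2 * L ^ 2 * vD ^ 2 * Real.exp (L * vB) := by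
    intro U
    set F : Finset ℕ := U.biUnion (fun n => (n : ℕ).primeFactors) with hFdef
    have hsubF : ∀ n ∈ U, (n : ℕ).primeFactors ⊆ F := by
      intro n hn
      rw [hFdef]
      exact Finset.subset_biUnion_of_mem (fun m : {n : ℕ // _} => (m : ℕ).primeFactors) hn
    have hFB : ∀ p ∈ F, p ∈ B := by
      intro p hp
      rw [hFdef, Finset.mem_biUnion] at hp
      obtain ⟨n, hnU, hpn⟩ := hp
      rw [Nat.mem_primeFactors] at hpn
      exact n.2.2.1 p hpn.1 hpn.2.1
    have hdec : ∀ n : {n : ℕ // 0 < n ∧ (∀ p : ℕ, Nat.Prime p → p ∣ n → p ∈ B) ∧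
        ((∃ p : ℕ, p ∈ B ∧ p ∉ A ∧ p ^ 2 ∣ n) ∨
         (∃ p q : ℕ, p ∈ B ∧ p ∉ A ∧ q ∈ B ∧ q ∉ A ∧ p ≠ q ∧ p ∣ n ∧ q ∣ n))},
        ∃ pq : ℕ × ℕ, ∃ m : ℕ, (pq.1 ∈ B ∧ pq.1 ∉ A) ∧ (pq.2 ∈ B ∧ pq.2 ∉ A) ∧ 0 < m ∧
          (n : ℕ) = pq.1 * pq.2 * m :=
      fun n => aux_decomp A B hB n.1 n.2.1 n.2.2.2
    choose π μ hπ1 hπ2 hμpos hfact using hdec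
    set P : Finset ℕ := F.filter (fun p => p ∉ A) with hPdef
    have hdvd1 : ∀ n, (π n).1 ∣ (n : ℕ) := fun n => ⟨(π n).2 * μ n, by rw [hfact n]; ring⟩
    have hdvd2 : ∀ n, (π n).2 ∣ (n : ℕ) := fun n => ⟨(π n).1 * μ n, by rw [hfact n]; ring⟩
    have hmaps : ∀ n ∈ U, π n ∈ P ×ˢ P := by
      intro n hn
      rw [Finset.mem_product, hPdef, Finset.mem_filter, Finset.mem_filter]
      refine ⟨⟨?_, (hπ1 n).2⟩, ⟨?_, (hπ2 n).2⟩⟩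
      · exact hsubF n hn (Nat.mem_primeFactors.mpr ⟨hB _ (hπ1 n).1, hdvd1 n, n.2.1.ne'⟩)
      · exact hsubF n hn (Nat.mem_primeFactors.mpr ⟨hB _ (hπ2 n).1, hdvd2 n, n.2.1.ne'⟩)
    obtain ⟨hSFsummable, hSFle⟩ := aux_euler hs0 hs1 B hB hW F hFB
    set SF : ℝ := ∑' m : Nat.factoredNumbers F, ((m : ℕ) : ℝ) ^ (-s) with hSFdef
    have hSF0 : 0 ≤ SF :=
      tsum_nonneg (fun m => Real.rpow_nonneg (Nat.cast_nonneg _) _)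
    have hμmem : ∀ n ∈ U, μ n ∈ Nat.factoredNumbers F := by
      intro n hn
      rw [Nat.mem_factoredNumbers]
      refine ⟨(hμpos n).ne', ?_⟩
      intro r hr
      have hrp := Nat.prime_of_mem_primeFactorsList hr
      have hrd : r ∣ (n : ℕ) :=
        (Nat.dvd_of_mem_primeFactorsList hr).trans ⟨(π n).1 * (π n).2, by rw [hfact n]; ring⟩
      exact hsubF n hn (Nat.mem_primeFactors.mpr ⟨hrp, hrd, n.2.1.ne'⟩)
    -- indicator version of SF
    have hIndSummable : Summable
        (Set.indicator (Nat.factoredNumbers F) (fun m : ℕ => ((m : ℝ)) ^ (-s))) :=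
      summable_subtype_iff_indicator.mp hSFsummable
    have hSFind : SF = ∑' m : ℕ,
        Set.indicator (Nat.factoredNumbers F) (fun m : ℕ => ((m : ℝ)) ^ (-s)) m := by
      rw [hSFdef]
      exact tsum_subtype (Nat.factoredNumbers F) (fun m : ℕ => ((m : ℝ)) ^ (-s))
    have hinner : ∀ pq ∈ P ×ˢ P,
        (∑ n ∈ U.filter (fun n => π n = pq), ((n : ℕ) : ℝ) ^ (-s)) ≤
          ((pq.1 : ℝ) ^ (-s) * (pq.2 : ℝ) ^ (-s)) * SF := by
      intro pq _
      set V := U.filter (fun n => π n = pq) with hVdef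
      have hVU : V ⊆ U := Finset.filter_subset _ _
      have hπV : ∀ n ∈ V, π n = pq := by
        intro n hn; rw [hVdef, Finset.mem_filter] at hn; exact hn.2
      have hterm : ∀ n ∈ V, ((n : ℕ) : ℝ) ^ (-s) =
          ((pq.1 : ℝ) ^ (-s) * (pq.2 : ℝ) ^ (-s)) * ((μ n : ℝ)) ^ (-s) := by
        intro n hn
        have h := hfact n
        rw [hπV n hn] at h
        rw [h]
        push_cast
        rw [Real.mul_rpow (by positivity) (Nat.cast_nonneg _),
          Real.mul_rpow (Nat.cast_nonneg _) (Nat.cast_nonneg _)]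
      rw [Finset.sum_congr rfl hterm, ← Finset.mul_sum]
      apply mul_le_mul_of_nonneg_left _ (by positivity)
      have hinj : Set.InjOn μ V := by
        intro a ha b hb hab
        have hfa := hfact a; rw [hπV a ha] at hfa
        have hfb := hfact b; rw [hπV b hb] at hfb
        apply Subtype.ext
        rw [hfa, hfb, hab]
      have himg : ∀ m ∈ V.image μ, m ∈ Nat.factoredNumbers F := by
        intro m hm
        rw [Finset.mem_image] at hm
        obtain ⟨n, hn, rfl⟩ := hm
        exact hμmem n (hVU hn)
      calc (∑ n ∈ V, ((μ n : ℝ)) ^ (-s))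
          = ∑ m ∈ V.image μ, ((m : ℝ)) ^ (-s) :=
            (Finset.sum_image (f := fun m : ℕ => ((m : ℝ)) ^ (-s))
              (fun a ha b hb h => hinj ha hb h)).symm
        _ = ∑ m ∈ V.image μ,
            Set.indicator (Nat.factoredNumbers F) (fun m : ℕ => ((m : ℝ)) ^ (-s)) m := by
            refine Finset.sum_congr rfl fun m hm => ?_
            rw [Set.indicator_of_mem (himg m hm)]
        _ ≤ ∑' m : ℕ,
            Set.indicator (Nat.factoredNumbers F) (fun m : ℕ => ((m : ℝ)) ^ (-s)) m := by
            refine Summable.sum_le_tsum _ (fun m _ => ?_) hIndSummable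
            exact Set.indicator_nonneg
              (fun x _ => Real.rpow_nonneg (Nat.cast_nonneg _) _) m
        _ = SF := hSFind.symm
    have hPsum : (∑ p ∈ P, ((p : ℝ)) ^ (-s)) ≤ L * vD := by
      have h1 : (∑ p ∈ P, ((p : ℝ)) ^ (-s)) ≤ ∑ p ∈ P, WD p := by
        refine Finset.sum_le_sum fun p hp => ?_
        rw [hPdef, Finset.mem_filter] at hp
        have hpB : p ∈ B := hFB p hp.1
        have hp2 : (2 : ℝ) ≤ (p : ℝ) := by exact_mod_cast (hB p hpB).two_le
        have hmem : p ∈ B \ A := (Set.mem_diff p).mpr ⟨hpB, hp.2⟩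
        rw [hWDdef, Set.indicator_of_mem hmem]
        exact Real.rpow_le_rpow_of_nonpos (by linarith) (by linarith)
          (by linarith)
      have h2 : (∑ p ∈ P, WD p) ≤ vD := Summable.sum_le_tsum P (fun i _ => hWDnonneg i) hWD
      nlinarith [hVD0]
    have hPnonneg : (0 : ℝ) ≤ ∑ p ∈ P, ((p : ℝ)) ^ (-s) :=
      Finset.sum_nonneg fun p _ => Real.rpow_nonneg (Nat.cast_nonneg _) _
    calc (∑ n ∈ U, ((n : ℕ) : ℝ) ^ (-s))
        = ∑ pq ∈ P ×ˢ P, ∑ n ∈ U.filter (fun n => π n = pq), ((n : ℕ) : ℝ) ^ (-s) :=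
          (Finset.sum_fiberwise_of_maps_to hmaps _).symm
      _ ≤ ∑ pq ∈ P ×ˢ P, ((pq.1 : ℝ) ^ (-s) * (pq.2 : ℝ) ^ (-s)) * SF :=
          Finset.sum_le_sum hinner
      _ = (∑ p ∈ P, ((p : ℝ)) ^ (-s)) ^ 2 * SF := by
          rw [← Finset.sum_mul]
          congr 1
          rw [Finset.sum_product, sq, Finset.sum_mul_sum]
      _ ≤ (L * vD) ^ 2 * Real.exp (L * vB) := by
          apply mul_le_mul _ hSFle hSF0 (by positivity)
          exact pow_le_pow_left₀ hPnonneg hPsum 2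
      _ ≤ 2 * L ^ 2 * vD ^ 2 * Real.exp (L * vB) := by
          have hexp : 0 ≤ Real.exp (L * vB) := (Real.exp_pos _).le
          nlinarith [mul_nonneg hL0 hVD0, hexp]
  exact Summable.tsum_le_of_sum_le (summable_of_sum_le hnonneg hmain) hmain
end

section
/- Let f(x) = (x+ε)/3 + 8n·e^{2n(D+1+x)}·(x+ε)², where ε = 1/(100·n·e^{2n(D+2)}), n ≥ 1 an integer, D ≥ 0. Then f(0) > 0, f is convex on [0,∞), and f(ε) < ε; consequently f has a unique fixed point x̃ in (0, ε), and any sequence x₀ = 0, x_{k+1} ≤ f(x_k) with x_k ≥ 0 satisfies x_k ≤ x̃ < ε for all k. -/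
theorem stmt_16 (n : ℕ) (hn : 1 ≤ n) (D : ℝ) (hD : 0 ≤ D)
    (ε : ℝ) (hε : ε = 1 / (100 * n * Real.exp (2 * n * (D + 2))))
    (f : ℝ → ℝ)
    (hf : ∀ x : ℝ, f x = (x + ε) / 3 + 8 * n * Real.exp (2 * n * (D + 1 + x)) * (x + ε) ^ 2) :
    0 < f 0 ∧ ConvexOn ℝ (Set.Ici 0) f ∧ f ε < ε ∧
    ∃ xt ∈ Set.Ioo 0 ε, f xt = xt ∧
      (∀ y ∈ Set.Ioo 0 ε, f y = y → y = xt) ∧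
      ∀ x : ℕ → ℝ, x 0 = 0 → (∀ k, 0 ≤ x k) → (∀ k, x (k + 1) ≤ f (x k)) →
        ∀ k, x k ≤ xt := by
  have hn1 : (1:ℝ) ≤ (n:ℝ) := by exact_mod_cast hn
  set E2 : ℝ := Real.exp (2 * n * (D + 2)) with hE2def
  have hE2pos : 0 < E2 := Real.exp_pos _
  have hE2ge1 : 1 ≤ E2 := Real.one_le_exp (by nlinarith)
  have hden : (0:ℝ) < 100 * n * E2 := by nlinarith
  have hεpos : 0 < ε := by rw [hε]; positivity
  have hεeq : ε * (100 * n * E2) = 1 := by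
    rw [hε]; field_simp
  have hε1 : ε ≤ 1 := by nlinarith
  -- f 0 > 0
  have h0 : 0 < f 0 := by
    rw [hf]; positivity
  -- monotonicity
  have hmono : ∀ x y : ℝ, 0 ≤ x → x ≤ y → f x ≤ f y := by
    intro x y hx hxy
    rw [hf, hf]
    gcongr
  -- convexity
  have hg1 : ConvexOn ℝ (Set.Ici (0:ℝ)) (fun x => Real.exp (2 * n * (D + 1 + x))) := by
    refine ⟨convex_Ici 0, fun x _ y _ p q hp hq hpq => ?_⟩
    have h := convexOn_exp.2 (Set.mem_univ (2 * n * (D + 1 + x)))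
      (Set.mem_univ (2 * n * (D + 1 + y))) hp hq hpq
    simp only [smul_eq_mul] at h ⊢
    have harg : 2 * (n:ℝ) * (D + 1 + (p * x + q * y))
        = p * (2 * n * (D + 1 + x)) + q * (2 * n * (D + 1 + y)) := by
      linear_combination (-(2 * (n:ℝ) * (D + 1))) * hpq
    rw [harg]; exact h
  have hg2 : ConvexOn ℝ (Set.Ici (0:ℝ)) (fun x => (x + ε) ^ 2) := by
    refine ⟨convex_Ici 0, fun x _ y _ p q hp hq hpq => ?_⟩
    have h := (Even.convexOn_pow (even_two)).2 (Set.mem_univ (x + ε))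
      (Set.mem_univ (y + ε)) hp hq hpq
    simp only [smul_eq_mul] at h ⊢
    have harg : p * x + q * y + ε = p * (x + ε) + q * (y + ε) := by
      linear_combination (-ε) * hpq
    rw [harg]; exact h
  have hmonov : MonovaryOn (fun x => Real.exp (2 * n * (D + 1 + x)))
      (fun x => (x + ε) ^ 2) (Set.Ici (0:ℝ)) := by
    intro i hi j hj hlt
    simp only [Set.mem_Ici] at hi hj
    simp only at hlt
    have hij : i ≤ j := by
      by_contra hcon
      push_neg at hcon
      nlinarith [hεpos]
    exact Real.exp_le_exp.2 (by nlinarith)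
  have hprod : ConvexOn ℝ (Set.Ici (0:ℝ))
      ((fun x => Real.exp (2 * n * (D + 1 + x))) * (fun x => (x + ε) ^ 2)) :=
    hg1.mul hg2 (fun x _ => (Real.exp_pos _).le) (fun x _ => by positivity) hmonov
  have haff : ConvexOn ℝ (Set.Ici (0:ℝ)) (fun x => (x + ε) / 3) := by
    refine ⟨convex_Ici 0, fun x _ y _ p q hp hq hpq => ?_⟩
    simp only [smul_eq_mul]
    have : (p * x + q * y + ε) / 3 = p * ((x + ε) / 3) + q * ((y + ε) / 3) := by
      linear_combination (-(ε / 3)) * hpq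
    exact le_of_eq this
  have hconv : ConvexOn ℝ (Set.Ici (0:ℝ)) f := by
    have heq : f = (fun x => (x + ε) / 3) + (8 * (n:ℝ)) •
        ((fun x => Real.exp (2 * n * (D + 1 + x))) * (fun x => (x + ε) ^ 2)) := by
      funext x
      simp only [Pi.add_apply, Pi.smul_apply, Pi.mul_apply, smul_eq_mul, hf]
      ring
    rw [heq]
    exact haff.add (hprod.smul (by positivity))
  -- f ε < ε
  have hE1le : Real.exp (2 * n * (D + 1 + ε)) ≤ E2 := by
    rw [hE2def]
    exact Real.exp_le_exp.2 (by nlinarith)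
  have hfε : f ε < ε := by
    rw [hf]
    have hkey : 8 * (n:ℝ) * Real.exp (2 * n * (D + 1 + ε)) * (ε + ε) ^ 2 ≤ 32 / 100 * ε := by
      have h1 : 8 * (n:ℝ) * Real.exp (2 * n * (D + 1 + ε)) * (ε + ε) ^ 2
          ≤ 8 * (n:ℝ) * E2 * (ε + ε) ^ 2 := by gcongr
      have h2 : 8 * (n:ℝ) * E2 * (ε + ε) ^ 2 = 32 / 100 * ε := by
        have : (n:ℝ) * E2 * ε = 1 / 100 := by linarith [hεeq]
        nlinarith [this]
      linarith
    linarith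
  -- fixed point via IVT
  have hfc : Continuous f := by
    have : f = fun x => (x + ε) / 3 + 8 * n * Real.exp (2 * n * (D + 1 + x)) * (x + ε) ^ 2 :=
      funext hf
    rw [this]; fun_prop
  set g : ℝ → ℝ := fun x => f x - x with hgdef
  have hgc : ContinuousOn g (Set.Icc 0 ε) := (hfc.sub continuous_id).continuousOn
  have hivt := intermediate_value_Ioo' (le_of_lt hεpos) hgc
  have h0mem : (0:ℝ) ∈ Set.Ioo (g ε) (g 0) := by
    constructor
    · simp only [hgdef]; linarith
    · simp only [hgdef]; linarith
  obtain ⟨xt, hxtmem, hxtfix⟩ := hivt h0mem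
  have hfix : f xt = xt := by
    have : f xt - xt = 0 := hxtfix
    linarith
  -- convexity of g
  have hgconv : ConvexOn ℝ (Set.Ici 0) g := by
    have hneg : ConvexOn ℝ (Set.Ici (0:ℝ)) (fun x => -x) := by
      refine ⟨convex_Ici 0, fun x _ y _ p q hp hq hpq => ?_⟩
      simp only [smul_eq_mul]
      ring_nf
      exact le_refl _
    exact hconv.add hneg
  -- key: between a zero and the negative endpoint, g is negative
  have hkey : ∀ a b : ℝ, 0 ≤ a → a < b → b < ε → g a = 0 → g b < 0 := by
    intro a b ha hab hbε hga
    have hεa : 0 < ε - a := by linarith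
    have hne : (ε - a) ≠ 0 := hεa.ne'
    have hp : 0 ≤ (ε - b) / (ε - a) := div_nonneg (by linarith) hεa.le
    have hq : 0 < (b - a) / (ε - a) := div_pos (by linarith) hεa
    have hpq : (ε - b) / (ε - a) + (b - a) / (ε - a) = 1 := by
      rw [← add_div, div_eq_one_iff_eq hne]; ring
    have hcomb : ((ε - b) / (ε - a)) • a + ((b - a) / (ε - a)) • ε = b := by
      simp only [smul_eq_mul]
      field_simp
      ring
    have h := hgconv.2 (Set.mem_Ici.2 ha) (Set.mem_Ici.2 hεpos.le) hp hq.le hpq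
    rw [hcomb] at h
    have hgε : g ε < 0 := by simp only [hgdef]; linarith
    have hgb : g b ≤ ((ε - b) / (ε - a)) * g a + ((b - a) / (ε - a)) * g ε := by
      simpa [smul_eq_mul] using h
    rw [hga, mul_zero, zero_add] at hgb
    exact lt_of_le_of_lt hgb (mul_neg_of_pos_of_neg hq hgε)
  refine ⟨h0, hconv, hfε, xt, hxtmem, hfix, ?_, ?_⟩
  · -- uniqueness
    intro y hy hfy
    have hgy : g y = 0 := by simp only [hgdef]; linarith
    by_contra hne
    rcases lt_or_gt_of_ne hne with h | h
    · have := hkey y xt hy.1.le h hxtmem.2 hgy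
      rw [hxtfix] at this; exact lt_irrefl 0 this
    · have := hkey xt y hxtmem.1.le h hy.2 hxtfix
      rw [hgy] at this; exact lt_irrefl 0 this
  · -- iteration
    intro x hx0 hxnn hxstep k
    induction k with
    | zero => rw [hx0]; exact hxtmem.1.le
    | succ k ih =>
      calc x (k + 1) ≤ f (x k) := hxstep k
        _ ≤ f xt := hmono (x k) xt (hxnn k) ih
        _ = xt := hfix
end
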